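/- arXiv:2009.09690 — 3 statements merged into one kernel-verified Lean document; each statement's English description precedes it below -/
import Mathlib

section
/- Let ĝ(λ₁,λ₂) = λ₁/λ₂ - log(λ₁/λ₂) + log(λ₁λ₂) + 1/(λ₁λ₂). There is no constant c ∈ [-(1+e⁸)/e¹⁴, -(1 + e - 3e⁸ + e⁹)/(e¹⁴(1+e))] such that ĝ(e,1) ≥ ĝ(e⁴,e³) + ∂ĝ/∂λ₁(e⁴,e³)·(e - e⁴) + ∂ĝ/∂λ₂(e⁴,e³)·(1 - e³) + c·(e - e⁴)·(1 - e³), where e = exp(1). -/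
noncomputable def gHat (l1 l2 : ℝ) : ℝ :=
  l1 / l2 - Real.log (l1 / l2) + Real.log (l1 * l2) + 1 / (l1 * l2)

set_option maxHeartbeats 1000000 in
theorem no_admissible_c :
    ¬ ∃ c : ℝ,
      c ∈ Set.Icc (-(1 + Real.exp 1 ^ 8) / Real.exp 1 ^ 14)
          (-(1 + Real.exp 1 - 3 * Real.exp 1 ^ 8 + Real.exp 1 ^ 9) /
            (Real.exp 1 ^ 14 * (1 + Real.exp 1))) ∧
      gHat (Real.exp 1) 1 ≥
        gHat (Real.exp 1 ^ 4) (Real.exp 1 ^ 3)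
          + (Real.exp 1 ^ 8 - 1) / Real.exp 1 ^ 11 * (Real.exp 1 - Real.exp 1 ^ 4)
          + -(Real.exp 1 ^ 7 * (Real.exp 1 - 2) + 1) / Real.exp 1 ^ 10 * (1 - Real.exp 1 ^ 3)
          + c * (Real.exp 1 - Real.exp 1 ^ 4) * (1 - Real.exp 1 ^ 3) := by
  rintro ⟨c, ⟨hc1, -⟩, hineq⟩
  set E := Real.exp 1 with hEdef
  have hE0 : (0:ℝ) < E := Real.exp_pos 1
  have hE1 : (1:ℝ) < E := by
    have := Real.exp_one_gt_d9; rw [← hEdef] at this; linarith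
  have hE3 : E < 3 := by
    have := Real.exp_one_lt_d9; rw [← hEdef] at this; linarith
  have hlog : Real.log E = 1 := by rw [hEdef, Real.log_exp]
  have hEne : E ≠ 0 := ne_of_gt hE0
  have g1 : gHat E 1 = E + 1 / E := by
    unfold gHat
    rw [div_one, mul_one, hlog]; ring
  have g2 : gHat (E ^ 4) (E ^ 3) = E + 6 + 1 / E ^ 7 := by
    unfold gHat
    have h1 : E ^ 4 / E ^ 3 = E := by field_simp
    have h2 : E ^ 4 * E ^ 3 = E ^ 7 := by ring
    rw [h1, h2, hlog, Real.log_pow, hlog]; push_cast; ring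
  -- coefficient positivity
  have hE3' : 1 < E ^ 3 := one_lt_pow₀ hE1 (by norm_num)
  have hA : E - E ^ 4 < 0 := by nlinarith
  have hB : 1 - E ^ 3 < 0 := by nlinarith
  have hP : 0 < (E - E ^ 4) * (1 - E ^ 3) := mul_pos_of_neg_of_neg hA hB
  have hcp : -(1 + E ^ 8) / E ^ 14 * ((E - E ^ 4) * (1 - E ^ 3))
      ≤ c * ((E - E ^ 4) * (1 - E ^ 3)) :=
    mul_le_mul_of_nonneg_right hc1 hP.le
  rw [g1, g2] at hineq
  have hineq' : E + 1 / E ≥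
      E + 6 + 1 / E ^ 7 + (E ^ 8 - 1) / E ^ 11 * (E - E ^ 4)
        + -(E ^ 7 * (E - 2) + 1) / E ^ 10 * (1 - E ^ 3)
        + -(1 + E ^ 8) / E ^ 14 * ((E - E ^ 4) * (1 - E ^ 3)) := by
    have : c * (E - E ^ 4) * (1 - E ^ 3) = c * ((E - E ^ 4) * (1 - E ^ 3)) := by ring
    rw [this] at hineq
    linarith
  -- simplify the RHS at c_min
  have hsimp : E + 6 + 1 / E ^ 7 + (E ^ 8 - 1) / E ^ 11 * (E - E ^ 4)
        + -(E ^ 7 * (E - 2) + 1) / E ^ 10 * (1 - E ^ 3)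
        + -(1 + E ^ 8) / E ^ 14 * ((E - E ^ 4) * (1 - E ^ 3))
      = 4 + 2 / E ^ 2 + 2 / E ^ 3 - 1 / E ^ 5 + 2 / E ^ 7 - 1 / E ^ 13 := by
    field_simp
    ring
  rw [hsimp] at hineq'
  -- final contradiction: E + 1/E < 4 + 2/E² + 2/E³ - 1/E⁵ + 2/E⁷ - 1/E¹³
  have hfrac : (4 + 2 / E ^ 2 + 2 / E ^ 3 - 1 / E ^ 5 + 2 / E ^ 7 - 1 / E ^ 13)
      - (E + 1 / E)
      = (4 * E ^ 13 + 2 * E ^ 11 + 2 * E ^ 10 - E ^ 8 + 2 * E ^ 6 - 1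
          - E ^ 14 - E ^ 12) / E ^ 13 := by
    field_simp
    ring
  have hnum : 0 < 4 * E ^ 13 + 2 * E ^ 11 + 2 * E ^ 10 - E ^ 8 + 2 * E ^ 6 - 1
      - E ^ 14 - E ^ 12 := by
    have hq : E ^ 2 + 1 < 4 * E := by nlinarith
    have h1 : E ^ 14 + E ^ 12 < 4 * E ^ 13 := by
      nlinarith [mul_lt_mul_of_pos_right hq (pow_pos hE0 12)]
    have h2 : E ^ 8 + 1 < 2 * E ^ 11 := by
      have h11 : 1 < E ^ 11 := one_lt_pow₀ hE1 (by norm_num)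
      have h8 : E ^ 8 < E ^ 11 := pow_lt_pow_right₀ hE1 (by norm_num)
      linarith
    have h3 : 0 < 2 * E ^ 10 + 2 * E ^ 6 := by positivity
    linarith
  have hpos : 0 < (4 * E ^ 13 + 2 * E ^ 11 + 2 * E ^ 10 - E ^ 8 + 2 * E ^ 6 - 1
      - E ^ 14 - E ^ 12) / E ^ 13 := div_pos hnum (by positivity)
  linarith [hfrac ▸ hpos]
end

section
/- Let W : GL⁺(2) → ℝ be of the form W(F) = ĥ(K(F)) + f(det F), where K(F) = λ_max(F)/λ_min(F), ĥ : [1,∞) → ℝ and f : (0,∞) → ℝ are lower semicontinuous with ĥ(t) → ∞ as t → ∞, f(t) → ∞ as t → ∞, and f(t) → ∞ as t → 0⁺. Then every sublevel set S_c = {F ∈ GL⁺(2) | W(F) ≤ c} is compact. -/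
open Matrix Filter Set Topology

noncomputable def smax (F : Matrix (Fin 2) (Fin 2) ℝ) : ℝ :=
  Real.sqrt (((F.transpose * F).trace + Real.sqrt ((F.transpose * F).trace ^ 2 - 4 * F.det ^ 2)) / 2)

noncomputable def smin (F : Matrix (Fin 2) (Fin 2) ℝ) : ℝ :=
  Real.sqrt (((F.transpose * F).trace - Real.sqrt ((F.transpose * F).trace ^ 2 - 4 * F.det ^ 2)) / 2)

lemma trace_tm (F : Matrix (Fin 2) (Fin 2) ℝ) :
    (F.transpose * F).trace = F 0 0 ^ 2 + F 0 1 ^ 2 + F 1 0 ^ 2 + F 1 1 ^ 2 := by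
  simp [Matrix.trace, Matrix.mul_apply, Fin.sum_univ_two, Matrix.transpose_apply, Matrix.diag]
  ring

lemma disc_nonneg (F : Matrix (Fin 2) (Fin 2) ℝ) :
    4 * F.det ^ 2 ≤ (F.transpose * F).trace ^ 2 := by
  rw [trace_tm, Matrix.det_fin_two]
  nlinarith [sq_nonneg (F 0 0 ^ 2 + F 0 1 ^ 2 - F 1 0 ^ 2 - F 1 1 ^ 2),
    sq_nonneg (F 0 0 * F 1 0 + F 0 1 * F 1 1)]

lemma trace_nonneg (F : Matrix (Fin 2) (Fin 2) ℝ) : 0 ≤ (F.transpose * F).trace := by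
  rw [trace_tm]; positivity

lemma sqrt_disc_le (F : Matrix (Fin 2) (Fin 2) ℝ) :
    Real.sqrt ((F.transpose * F).trace ^ 2 - 4 * F.det ^ 2) ≤ (F.transpose * F).trace := by
  have h := disc_nonneg F
  have := trace_nonneg F
  calc Real.sqrt ((F.transpose * F).trace ^ 2 - 4 * F.det ^ 2)
      ≤ Real.sqrt ((F.transpose * F).trace ^ 2) := Real.sqrt_le_sqrt (by nlinarith)
    _ = (F.transpose * F).trace := by rw [Real.sqrt_sq this]

lemma smax_sq (F : Matrix (Fin 2) (Fin 2) ℝ) :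
    smax F ^ 2 = ((F.transpose * F).trace + Real.sqrt ((F.transpose * F).trace ^ 2 - 4 * F.det ^ 2)) / 2 := by
  have h1 := trace_nonneg F
  have h2 := Real.sqrt_nonneg ((F.transpose * F).trace ^ 2 - 4 * F.det ^ 2)
  rw [smax, Real.sq_sqrt (by linarith)]

lemma smin_sq (F : Matrix (Fin 2) (Fin 2) ℝ) :
    smin F ^ 2 = ((F.transpose * F).trace - Real.sqrt ((F.transpose * F).trace ^ 2 - 4 * F.det ^ 2)) / 2 := by
  have h2 := sqrt_disc_le F
  rw [smin, Real.sq_sqrt (by linarith)]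

lemma smin_nonneg (F : Matrix (Fin 2) (Fin 2) ℝ) : 0 ≤ smin F := Real.sqrt_nonneg _

lemma smax_nonneg (F : Matrix (Fin 2) (Fin 2) ℝ) : 0 ≤ smax F := Real.sqrt_nonneg _

lemma smin_le_smax (F : Matrix (Fin 2) (Fin 2) ℝ) : smin F ≤ smax F := by
  apply Real.sqrt_le_sqrt
  have := Real.sqrt_nonneg ((F.transpose * F).trace ^ 2 - 4 * F.det ^ 2)
  linarith

lemma smax_mul_smin (F : Matrix (Fin 2) (Fin 2) ℝ) (h : 0 < F.det) :
    smax F * smin F = F.det := by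
  have h1 := trace_nonneg F
  have h2 := Real.sqrt_nonneg ((F.transpose * F).trace ^ 2 - 4 * F.det ^ 2)
  have h3 := sqrt_disc_le F
  have hs : Real.sqrt ((F.transpose * F).trace ^ 2 - 4 * F.det ^ 2) ^ 2
      = (F.transpose * F).trace ^ 2 - 4 * F.det ^ 2 := Real.sq_sqrt (by linarith [disc_nonneg F])
  rw [smax, smin, ← Real.sqrt_mul (by linarith)]
  have : ((F.transpose * F).trace + Real.sqrt ((F.transpose * F).trace ^ 2 - 4 * F.det ^ 2)) / 2 *
      (((F.transpose * F).trace - Real.sqrt ((F.transpose * F).trace ^ 2 - 4 * F.det ^ 2)) / 2)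
      = F.det ^ 2 := by nlinarith
  rw [this, Real.sqrt_sq h.le]

lemma smin_pos (F : Matrix (Fin 2) (Fin 2) ℝ) (h : 0 < F.det) : 0 < smin F := by
  have h1 := trace_nonneg F
  have hd := disc_nonneg F
  have hT : 0 < (F.transpose * F).trace := by nlinarith
  have hlt : Real.sqrt ((F.transpose * F).trace ^ 2 - 4 * F.det ^ 2) < (F.transpose * F).trace := by
    calc Real.sqrt ((F.transpose * F).trace ^ 2 - 4 * F.det ^ 2)
        < Real.sqrt ((F.transpose * F).trace ^ 2) := by
          apply Real.sqrt_lt_sqrt (by nlinarith) (by nlinarith)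
      _ = (F.transpose * F).trace := Real.sqrt_sq hT.le
  rw [smin]
  exact Real.sqrt_pos.mpr (by linarith)

lemma one_le_ratio (F : Matrix (Fin 2) (Fin 2) ℝ) (h : 0 < F.det) : 1 ≤ smax F / smin F :=
  (one_le_div (smin_pos F h)).mpr (smin_le_smax F)

lemma continuous_trace_tm : Continuous fun F : Matrix (Fin 2) (Fin 2) ℝ => (F.transpose * F).trace := by
  simp only [trace_tm]
  fun_prop

lemma continuous_det2 : Continuous fun F : Matrix (Fin 2) (Fin 2) ℝ => F.det := by
  simp only [Matrix.det_fin_two]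
  fun_prop

lemma continuous_smax : Continuous smax := by
  unfold smax
  simp only [trace_tm, Matrix.det_fin_two]
  fun_prop

lemma continuous_smin : Continuous smin := by
  unfold smin
  simp only [trace_tm, Matrix.det_fin_two]
  fun_prop

lemma lsc_bddBelow {g : ℝ → ℝ} {s : Set ℝ} (hs : IsCompact s) (hg : LowerSemicontinuousOn g s) :
    ∃ m, ∀ x ∈ s, m ≤ g x := by
  by_contra h
  push_neg at h
  choose u hu hfu using fun n : ℕ => h (-(n : ℝ))
  obtain ⟨x, hx, φ, hφ, hconv⟩ := hs.tendsto_subseq hu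
  have htend : Tendsto (fun n => u (φ n)) atTop (𝓝[s] x) :=
    tendsto_nhdsWithin_of_tendsto_nhds_of_eventually_within _ hconv
      (Eventually.of_forall fun n => hu _)
  have hev : ∀ᶠ n in atTop, g x - 1 < g (u (φ n)) :=
    htend.eventually (hg x hx (g x - 1) (by linarith))
  have hbot : Tendsto (fun n => g (u (φ n))) atTop atBot := by
    apply tendsto_atBot_mono (fun n => (hfu (φ n)).le)
    have : Tendsto (fun n : ℕ => -((φ n : ℕ) : ℝ)) atTop atBot := by
      apply Filter.tendsto_neg_atBot_iff.mpr
      exact tendsto_natCast_atTop_atTop.comp hφ.tendsto_atTop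
    exact this
  obtain ⟨n, h1, h2⟩ := (hev.and (hbot.eventually (eventually_lt_atBot (g x - 1)))).exists
  linarith

theorem sublevel_sets_compact (hhat f : ℝ → ℝ)
    (hh_lsc : LowerSemicontinuousOn hhat (Set.Ici 1))
    (hf_lsc : LowerSemicontinuousOn f (Set.Ioi 0))
    (hh_top : Filter.Tendsto hhat Filter.atTop Filter.atTop)
    (hf_top : Filter.Tendsto f Filter.atTop Filter.atTop)
    (hf_zero : Filter.Tendsto f (nhdsWithin 0 (Set.Ioi 0)) Filter.atTop)
    (c : ℝ) :
    IsCompact {F : Matrix (Fin 2) (Fin 2) ℝ |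
      0 < F.det ∧ hhat (smax F / smin F) + f F.det ≤ c} := by
  -- lower bound for hhat on [1, ∞)
  obtain ⟨Mh, hMh⟩ := eventually_atTop.mp (hh_top.eventually (eventually_ge_atTop 0))
  obtain ⟨m₁, hm₁⟩ := lsc_bddBelow (isCompact_Icc (a := (1:ℝ)) (b := max Mh 1))
    (hh_lsc.mono (Icc_subset_Ici_self))
  set mh : ℝ := min m₁ 0 with hmh_def
  have hmh : ∀ t ∈ Ici (1:ℝ), mh ≤ hhat t := by
    intro t ht
    rcases le_or_gt t (max Mh 1) with h | h
    · exact le_trans (min_le_left _ _) (hm₁ t ⟨ht, h⟩)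
    · exact le_trans (min_le_right _ _) (hMh t ((le_max_left _ _).trans h.le))
  -- lower bound for f on (0, ∞)
  obtain ⟨Mf, hMf⟩ := eventually_atTop.mp (hf_top.eventually (eventually_ge_atTop 0))
  obtain ⟨δ₀, hδ₀pos, hδ₀⟩ := ((nhdsGT_basis (0:ℝ)).eventually_iff).mp
    (hf_zero.eventually (eventually_ge_atTop 0))
  have hhalf : (0:ℝ) < δ₀ / 2 := by linarith
  obtain ⟨m₂, hm₂⟩ := lsc_bddBelow (isCompact_Icc (a := δ₀/2) (b := max Mf (δ₀/2)))
    (hf_lsc.mono (fun x hx => lt_of_lt_of_le hhalf hx.1))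
  set mf : ℝ := min m₂ 0 with hmf_def
  have hmf : ∀ t ∈ Ioi (0:ℝ), mf ≤ f t := by
    intro t ht
    rcases lt_or_ge t (δ₀/2) with h | h
    · exact le_trans (min_le_right _ _) (hδ₀ ⟨ht, by linarith⟩)
    · rcases le_or_gt t (max Mf (δ₀/2)) with h2 | h2
      · exact le_trans (min_le_left _ _) (hm₂ t ⟨h, h2⟩)
      · exact le_trans (min_le_right _ _) (hMf t ((le_max_left _ _).trans h2.le))
  -- thresholds
  obtain ⟨δ, hδpos, hδ⟩ := ((nhdsGT_basis (0:ℝ)).eventually_iff).mp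
    (hf_zero.eventually (eventually_gt_atTop (c - mh)))
  obtain ⟨M₁, hM₁⟩ := eventually_atTop.mp (hf_top.eventually (eventually_gt_atTop (c - mh)))
  obtain ⟨R, hR⟩ := eventually_atTop.mp (hh_top.eventually (eventually_gt_atTop (c - mf)))
  set S := {F : Matrix (Fin 2) (Fin 2) ℝ |
      0 < F.det ∧ hhat (smax F / smin F) + f F.det ≤ c} with hS_def
  -- key bounds on elements of S
  have key : ∀ F ∈ S, δ ≤ F.det ∧ F.det ≤ max M₁ δ ∧ smax F / smin F ≤ max R 1 := by
    rintro F ⟨hFd, hFle⟩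
    have hK1 : (1:ℝ) ≤ smax F / smin F := one_le_ratio F hFd
    have hhK := hmh _ hK1
    have hfd := hmf _ hFd
    refine ⟨?_, ?_, ?_⟩
    · by_contra hcon
      push_neg at hcon
      have := hδ ⟨hFd, hcon⟩
      linarith
    · rcases le_or_gt F.det M₁ with h | h
      · exact h.trans (le_max_left _ _)
      · exact absurd (hM₁ _ h.le) (by linarith)
    · rcases le_or_gt (smax F / smin F) R with h | h
      · exact h.trans (le_max_left _ _)
      · exact absurd (hR _ h.le) (by linarith)
  have hδM : (0:ℝ) ≤ 2 * (max R 1) * (max M₁ δ) := by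
    have h1 : (0:ℝ) ≤ max R 1 := le_trans zero_le_one (le_max_right _ _)
    have h2 : (0:ℝ) ≤ max M₁ δ := le_trans hδpos.le (le_max_right _ _)
    positivity
  set B := Real.sqrt (2 * max R 1 * max M₁ δ) with hB_def
  haveI hseq : SequentialSpace (Matrix (Fin 2) (Fin 2) ℝ) :=
    (inferInstance : SequentialSpace ((Fin 2) → (Fin 2) → ℝ))
  have hclosed : IsClosed S := by
    apply IsSeqClosed.isClosed
    intro u F hu hlim
    have hdet_tend : Tendsto (fun n => (u n).det) atTop (𝓝 F.det) :=
      (continuous_det2.tendsto F).comp hlim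
    have hdet_ge : δ ≤ F.det :=
      le_of_tendsto_of_tendsto tendsto_const_nhds hdet_tend
        (Eventually.of_forall fun n => (key _ (hu n)).1)
    have hFd : 0 < F.det := lt_of_lt_of_le hδpos hdet_ge
    have hsmin : 0 < smin F := smin_pos F hFd
    have hK_tend : Tendsto (fun n => smax (u n) / smin (u n)) atTop (𝓝 (smax F / smin F)) :=
      Tendsto.div ((continuous_smax.tendsto F).comp hlim)
        ((continuous_smin.tendsto F).comp hlim) hsmin.ne'
    refine ⟨hFd, ?_⟩
    by_contra hcon
    push_neg at hcon
    set ε := (hhat (smax F / smin F) + f F.det - c) / 2 with hε_def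
    have hεpos : 0 < ε := by simp only [hε_def]; linarith
    have hK1 : smax F / smin F ∈ Ici (1:ℝ) := one_le_ratio F hFd
    have htendK : Tendsto (fun n => smax (u n) / smin (u n)) atTop (𝓝[Ici 1] (smax F / smin F)) :=
      tendsto_nhdsWithin_of_tendsto_nhds_of_eventually_within _ hK_tend
        (Eventually.of_forall fun n => one_le_ratio (u n) (hu n).1)
    have htendd : Tendsto (fun n => (u n).det) atTop (𝓝[Ioi 0] F.det) :=
      tendsto_nhdsWithin_of_tendsto_nhds_of_eventually_within _ hdet_tend
        (Eventually.of_forall fun n => (hu n).1)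
    have ev1 : ∀ᶠ n in atTop, hhat (smax F / smin F) - ε < hhat (smax (u n) / smin (u n)) :=
      htendK.eventually (hh_lsc _ hK1 _ (by linarith))
    have ev2 : ∀ᶠ n in atTop, f F.det - ε < f ((u n).det) :=
      htendd.eventually (hf_lsc _ hFd _ (by linarith))
    obtain ⟨n, h1, h2⟩ := (ev1.and ev2).exists
    have := (hu n).2
    simp only [hε_def] at h1 h2
    linarith
  have hKcpt : IsCompact {F : Matrix (Fin 2) (Fin 2) ℝ | ∀ i j, F i j ∈ Icc (-B) B} := by
    have he : {F : Matrix (Fin 2) (Fin 2) ℝ | ∀ i j, F i j ∈ Icc (-B) B}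
        = Set.pi univ (fun _ : Fin 2 => Set.pi univ fun _ : Fin 2 => Icc (-B) B) := by
      ext F
      constructor
      · intro h i _ j _; exact h i j
      · intro h i j; exact h i (mem_univ i) j (mem_univ j)
    rw [he]
    exact isCompact_univ_pi fun _ => isCompact_univ_pi fun _ => isCompact_Icc
  apply hKcpt.of_isClosed_subset hclosed
  intro F hF
  obtain ⟨hd1, hd2, hK⟩ := key F hF
  have hFd : 0 < F.det := hF.1
  have hsminpos := smin_pos F hFd
  have hsq : smax F ^ 2 ≤ max R 1 * max M₁ δ := by
    have e : smax F ^ 2 = (smax F / smin F) * (smax F * smin F) := by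
      field_simp
    rw [e, smax_mul_smin F hFd]
    have h1 : (0:ℝ) ≤ smax F / smin F := le_trans zero_le_one (one_le_ratio F hFd)
    exact mul_le_mul hK hd2 hFd.le (le_trans h1 hK)
  have htr : (F.transpose * F).trace ≤ 2 * max R 1 * max M₁ δ := by
    have e : (F.transpose * F).trace = smax F ^ 2 + smin F ^ 2 := by
      rw [smax_sq, smin_sq]; ring
    have h2 : smin F ^ 2 ≤ smax F ^ 2 := by
      have := smin_le_smax F
      nlinarith [smin_nonneg F]
    rw [e]; linarith
  intro i j
  have hentry : F i j ^ 2 ≤ 2 * max R 1 * max M₁ δ := by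
    have := trace_tm F
    fin_cases i <;> fin_cases j <;>
      simp only [Fin.mk_zero, Fin.mk_one, Fin.isValue] <;> nlinarith [sq_nonneg (F 0 0), sq_nonneg (F 0 1),
        sq_nonneg (F 1 0), sq_nonneg (F 1 1)]
  have habs : |F i j| ≤ B := by
    rw [hB_def, ← Real.sqrt_sq_eq_abs]
    exact Real.sqrt_le_sqrt hentry
  exact abs_le.mp habs
end

section
/- Let W : GL⁺(2) → ℝ be of the form W(F) = ĥ(K(F)) + f(det F), where ĥ : [1,∞) → ℝ is monotone and f : (0,∞) → ℝ is q-convex (all sublevel sets of f are intervals). Then every sublevel set {F ∈ GL⁺(2) | W(F) ≤ c} is path-connected. -/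
noncomputable def mk (p q r s : ℝ) : Matrix (Fin 2) (Fin 2) ℝ :=
  !![p+r, -q+s; q+s, p-r]

lemma det_mk (p q r s : ℝ) : (mk p q r s).det = (p^2+q^2) - (r^2+s^2) := by
  simp [mk, Matrix.det_fin_two]; ring

lemma trace_mk (p q r s : ℝ) :
    ((mk p q r s).transpose * mk p q r s).trace = 2*(p^2+q^2+r^2+s^2) := by
  have ht : (mk p q r s).transpose = !![p+r, q+s; -q+s, p-r] := by
    ext i j; fin_cases i <;> fin_cases j <;> simp [mk]
  rw [ht]
  simp [mk, Matrix.trace_fin_two, Matrix.mul_apply, Fin.sum_univ_two]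
  ring

lemma smaxmin_mk (p q r s : ℝ) (h : r^2+s^2 < p^2+q^2) :
    smax (mk p q r s) = Real.sqrt (p^2+q^2) + Real.sqrt (r^2+s^2) ∧
    smin (mk p q r s) = Real.sqrt (p^2+q^2) - Real.sqrt (r^2+s^2) := by
  set Z := Real.sqrt (p^2+q^2) with hZdef
  set W := Real.sqrt (r^2+s^2) with hWdef
  have hZ : Z^2 = p^2+q^2 := Real.sq_sqrt (by positivity)
  have hW : W^2 = r^2+s^2 := Real.sq_sqrt (by positivity)
  have hZ0 : 0 ≤ Z := Real.sqrt_nonneg _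
  have hW0 : 0 ≤ W := Real.sqrt_nonneg _
  have hWZ : W < Z := by nlinarith
  have hdisc : ((mk p q r s).transpose * mk p q r s).trace ^2 - 4*((mk p q r s).det)^2
      = (4*Z*W)^2 := by
    rw [trace_mk, det_mk]; linear_combination (-16*(r^2+s^2))*hZ + (-16*Z^2)*hW
  have htr : ((mk p q r s).transpose * mk p q r s).trace = 2*(Z^2+W^2) := by
    rw [trace_mk]; linear_combination (-2)*hZ + (-2)*hW
  constructor
  · unfold smax
    rw [hdisc, htr, Real.sqrt_sq (by positivity)]
    have e : (2*(Z^2+W^2) + 4*Z*W)/2 = (Z+W)^2 := by ring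
    rw [e, Real.sqrt_sq (by positivity)]
  · unfold smin
    rw [hdisc, htr, Real.sqrt_sq (by positivity)]
    have e : (2*(Z^2+W^2) - 4*Z*W)/2 = (Z-W)^2 := by ring
    rw [e, Real.sqrt_sq (by linarith)]


lemma continuous_mk {α} [TopologicalSpace α] {a b c d : α → ℝ} (ha : Continuous a) (hb : Continuous b)
    (hc : Continuous c) (hd : Continuous d) : Continuous fun x => mk (a x) (b x) (c x) (d x) := by
  apply continuous_matrix
  intro i j
  fin_cases i <;> fin_cases j <;> simp [mk] <;> fun_prop

lemma eq_mk (F : Matrix (Fin 2) (Fin 2) ℝ) :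
    F = mk ((F 0 0 + F 1 1)/2) ((F 1 0 - F 0 1)/2) ((F 0 0 - F 1 1)/2) ((F 0 1 + F 1 0)/2) := by
  ext i j; fin_cases i <;> fin_cases j <;> simp [mk] <;> ring
section
variable (hhat f : ℝ → ℝ) (c : ℝ)

def SL : Set (Matrix (Fin 2) (Fin 2) ℝ) :=
  {F | 0 < F.det ∧ hhat (smax F / smin F) + f F.det ≤ c}

lemma mem_mk {p q r s : ℝ} (h : r^2+s^2 < p^2+q^2)
    (h2 : hhat ((Real.sqrt (p^2+q^2) + Real.sqrt (r^2+s^2)) /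
        (Real.sqrt (p^2+q^2) - Real.sqrt (r^2+s^2))) + f (p^2+q^2-(r^2+s^2)) ≤ c) :
    mk p q r s ∈ SL hhat f c := by
  obtain ⟨h1, h1'⟩ := smaxmin_mk p q r s h
  refine ⟨by rw [det_mk]; linarith, ?_⟩
  rw [det_mk, h1, h1']
  exact h2

lemma joinedIn_of {X : Type*} [TopologicalSpace X] {S : Set X} {x y : X} (γ : ℝ → X)
    (hc : Continuous γ) (h0 : γ 0 = x) (h1 : γ 1 = y)
    (hmem : ∀ t, 0 ≤ t → t ≤ 1 → γ t ∈ S) : JoinedIn S x y :=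
  ⟨⟨⟨fun t => γ t.1, hc.comp continuous_subtype_val⟩, by simpa using h0, by simpa using h1⟩,
    fun t => hmem t.1 t.2.1 t.2.2⟩
end
lemma key_ineq (A B u : ℝ) (hB : 0 ≤ B) (hBA : B < A) (hu0 : 0 ≤ u) (hu1 : u ≤ 1) :
    u*Real.sqrt B < Real.sqrt (A - B + u^2*B) ∧
    (Real.sqrt (A-B+u^2*B) + u*Real.sqrt B)/(Real.sqrt (A-B+u^2*B) - u*Real.sqrt B)
      ≤ (Real.sqrt A + Real.sqrt B)/(Real.sqrt A - Real.sqrt B) := by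
  set Z := Real.sqrt A with hZdef
  set W := Real.sqrt B with hWdef
  have hZ2 : Z^2 = A := Real.sq_sqrt (by linarith)
  have hW2 : W^2 = B := Real.sq_sqrt hB
  have hW0 : 0 ≤ W := Real.sqrt_nonneg _
  have hZ0 : 0 ≤ Z := Real.sqrt_nonneg _
  have hWZ : W < Z := by nlinarith
  set Zt := Real.sqrt (A - B + u^2*B) with hZtdef
  have hZt2 : Zt^2 = A - B + u^2*B := Real.sq_sqrt (by nlinarith)
  have hZt0 : 0 ≤ Zt := Real.sqrt_nonneg _
  have h1 : u*W < Zt := by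
    have hsq : (u*W)^2 < Zt^2 := by nlinarith
    exact lt_of_pow_lt_pow_left₀ 2 hZt0 hsq
  refine ⟨h1, ?_⟩
  have huZ : u*Z ≤ Zt := by
    have hsq : (u*Z)^2 ≤ A - B + u^2*B := by
      nlinarith [mul_nonneg (by nlinarith : (0:ℝ) ≤ 1-u^2) (by nlinarith : (0:ℝ) ≤ A-B)]
    calc u*Z = Real.sqrt ((u*Z)^2) := (Real.sqrt_sq (by positivity)).symm
    _ ≤ Zt := Real.sqrt_le_sqrt hsq
  rw [div_le_div_iff₀ (by linarith) (by linarith)]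
  nlinarith [mul_le_mul_of_nonneg_left huZ hW0]

lemma one_le_ratio_s16 {a b : ℝ} (hb : 0 ≤ b) (hab : b < a) : 1 ≤ (a+b)/(a-b) := by
  rw [le_div_iff₀ (by linarith)]; linarith

lemma step1 (hhat f : ℝ → ℝ) (hh_mono : MonotoneOn hhat (Set.Ici 1)) (c : ℝ)
    (p q r s : ℝ) (h : r^2+s^2 < p^2+q^2)
    (hmem : mk p q r s ∈ SL hhat f c) :
    JoinedIn (SL hhat f c) (mk p q r s)
      (mk (p * Real.sqrt ((p^2+q^2)-(r^2+s^2)) / Real.sqrt (p^2+q^2))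
          (q * Real.sqrt ((p^2+q^2)-(r^2+s^2)) / Real.sqrt (p^2+q^2)) 0 0) := by
  set A := p^2+q^2 with hAdef
  set B := r^2+s^2 with hBdef
  have hB0 : 0 ≤ B := by positivity
  have hA0 : 0 < A := lt_of_le_of_lt hB0 h
  have hZ0 : 0 < Real.sqrt A := Real.sqrt_pos.2 hA0
  have hA2 : (Real.sqrt A)^2 = A := Real.sq_sqrt hA0.le
  have hd0 : 0 < A - B := by linarith
  -- the F-side ratio bound from membership
  obtain ⟨hsx, hsn⟩ := smaxmin_mk p q r s h
  have hK : hhat ((Real.sqrt A + Real.sqrt B)/(Real.sqrt A - Real.sqrt B)) + f (A-B) ≤ c := by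
    have := hmem.2
    rwa [hsx, hsn, det_mk] at this
  have hWZ : Real.sqrt B < Real.sqrt A := by
    have := Real.sqrt_lt_sqrt hB0 h
    simpa using this
  refine joinedIn_of
    (fun t => mk (p * Real.sqrt ((A-B) + (1-t)^2*B) / Real.sqrt A)
      (q * Real.sqrt ((A-B) + (1-t)^2*B) / Real.sqrt A) ((1-t)*r) ((1-t)*s)) ?_ ?_ ?_ ?_
  · exact continuous_mk (by fun_prop) (by fun_prop) (by fun_prop) (by fun_prop)
  · show mk _ _ _ _ = mk p q r s
    have e : (A-B) + (1-(0:ℝ))^2*B = A := by ring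
    rw [e, mul_div_assoc, mul_div_assoc, div_self (ne_of_gt hZ0)]
    norm_num
  · show mk _ _ _ _ = mk _ _ 0 0
    have e : (A-B) + (1-(1:ℝ))^2*B = A - B := by ring
    rw [e]
    norm_num
  · intro t ht0 ht1
    have hu0 : 0 ≤ 1 - t := by linarith
    have hu1 : 1 - t ≤ 1 := by linarith
    have hin0 : 0 ≤ (A-B) + (1-t)^2*B := by nlinarith
    have hsq : (Real.sqrt ((A-B) + (1-t)^2*B))^2 = (A-B) + (1-t)^2*B := Real.sq_sqrt hin0
    have hPQ : (p * Real.sqrt ((A-B) + (1-t)^2*B) / Real.sqrt A)^2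
        + (q * Real.sqrt ((A-B) + (1-t)^2*B) / Real.sqrt A)^2 = (A-B) + (1-t)^2*B := by
      rw [div_pow, div_pow, mul_pow, mul_pow, hsq, hA2, ← add_div]
      rw [show p^2*((A-B) + (1-t)^2*B) + q^2*((A-B) + (1-t)^2*B)
          = A*((A-B) + (1-t)^2*B) from by rw [hAdef]; ring]
      field_simp
    have hRS : ((1-t)*r)^2 + ((1-t)*s)^2 = (1-t)^2*B := by rw [hBdef]; ring
    obtain ⟨hk1, hk2⟩ := key_ineq A B (1-t) hB0 h hu0 hu1
    apply mem_mk
    · rw [hPQ, hRS]; linarith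
    · rw [hPQ, hRS]
      have hsB : Real.sqrt ((1-t)^2*B) = (1-t)*Real.sqrt B := by
        rw [Real.sqrt_mul (sq_nonneg _), Real.sqrt_sq hu0]
      rw [hsB]
      rw [show (A-B) + (1-t)^2*B - (1-t)^2*B = A - B from by ring]
      have hrat : 1 ≤ (Real.sqrt ((A-B) + (1-t)^2*B) + (1-t)*Real.sqrt B) /
          (Real.sqrt ((A-B) + (1-t)^2*B) - (1-t)*Real.sqrt B) :=
        one_le_ratio_s16 (by positivity) hk1
      have hrat0 : 1 ≤ (Real.sqrt A + Real.sqrt B)/(Real.sqrt A - Real.sqrt B) :=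
        one_le_ratio_s16 (Real.sqrt_nonneg _) hWZ
      have := hh_mono (Set.mem_Ici.2 hrat) (Set.mem_Ici.2 hrat0) hk2
      linarith
lemma sq_norm_scale (p q dd : ℝ) (hA : 0 < p^2+q^2) (hdd : 0 ≤ dd) :
    (p*Real.sqrt dd/Real.sqrt (p^2+q^2))^2 + (q*Real.sqrt dd/Real.sqrt (p^2+q^2))^2 = dd := by
  have h1 : (Real.sqrt dd)^2 = dd := Real.sq_sqrt hdd
  have h2 : (Real.sqrt (p^2+q^2))^2 = p^2+q^2 := Real.sq_sqrt hA.le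
  rw [div_pow, div_pow, mul_pow, mul_pow, h1, h2, ← add_div]
  rw [show p^2*dd + q^2*dd = (p^2+q^2)*dd from by ring]
  field_simp

lemma step2 (hhat f : ℝ → ℝ) (c : ℝ) (p q : ℝ) (hpq : 0 < p^2+q^2)
    (hc1 : hhat 1 + f (p^2+q^2) ≤ c) :
    JoinedIn (SL hhat f c) (mk p q 0 0) (mk (Real.sqrt (p^2+q^2)) 0 0 0) := by
  set z : ℂ := (p : ℂ) + (q : ℂ) * Complex.I with hzdef
  have hre : z.re = p := by simp [hzdef]
  have him : z.im = q := by simp [hzdef]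
  have habs : ‖z‖ = Real.sqrt (p^2+q^2) := by
    rw [Complex.norm_def, Complex.normSq_apply, hre, him]
    ring_nf
  have hz0 : z ≠ 0 := by
    intro h0
    rw [h0] at hre him
    simp at hre him
    rw [← hre, ← him] at hpq
    norm_num at hpq
  have hcos : Real.cos z.arg = p / Real.sqrt (p^2+q^2) := by
    rw [Complex.cos_arg hz0, hre, habs]
  have hsin : Real.sin z.arg = q / Real.sqrt (p^2+q^2) := by
    rw [Complex.sin_arg, him, habs]
  have hs0 : (0:ℝ) < Real.sqrt (p^2+q^2) := Real.sqrt_pos.2 hpq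
  refine joinedIn_of
    (fun t => mk (Real.sqrt (p^2+q^2) * Real.cos ((1-t)*z.arg))
      (Real.sqrt (p^2+q^2) * Real.sin ((1-t)*z.arg)) 0 0) ?_ ?_ ?_ ?_
  · exact continuous_mk (by fun_prop) (by fun_prop) continuous_const continuous_const
  · show mk _ _ 0 0 = mk p q 0 0
    have e1 : Real.sqrt (p^2+q^2) * (p/Real.sqrt (p^2+q^2)) = p := by field_simp
    have e2 : Real.sqrt (p^2+q^2) * (q/Real.sqrt (p^2+q^2)) = q := by field_simp
    norm_num [hcos, hsin]
    rw [e1, e2]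
  · show mk _ _ 0 0 = mk _ 0 0 0
    norm_num
  · intro t _ _
    set θ := (1-t)*z.arg
    have hPQ : (Real.sqrt (p^2+q^2) * Real.cos θ)^2 + (Real.sqrt (p^2+q^2) * Real.sin θ)^2
        = p^2+q^2 := by
      have hds : (Real.sqrt (p^2+q^2))^2 = p^2+q^2 := Real.sq_sqrt hpq.le
      have s1 : Real.sin θ^2 + Real.cos θ^2 = 1 := Real.sin_sq_add_cos_sq θ
      linear_combination (Real.cos θ^2 + Real.sin θ^2)*hds + (p^2+q^2)*s1
    apply mem_mk
    · rw [hPQ]; norm_num; exact hpq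
    · rw [hPQ]
      norm_num
      rw [div_self (ne_of_gt hs0)]
      exact hc1

lemma step3 (hhat f : ℝ → ℝ) (c : ℝ)
    (hconv : Convex ℝ {t : ℝ | t ∈ Set.Ioi (0:ℝ) ∧ f t ≤ c - hhat 1})
    (a b : ℝ) (ha : 0 < a) (hb : 0 < b) (hab : a ≤ b)
    (hfa : hhat 1 + f (a^2) ≤ c) (hfb : hhat 1 + f (b^2) ≤ c) :
    JoinedIn (SL hhat f c) (mk a 0 0 0) (mk b 0 0 0) := by
  have hOC := hconv.ordConnected
  have hsub : Set.Icc (a^2) (b^2) ⊆ {t : ℝ | t ∈ Set.Ioi (0:ℝ) ∧ f t ≤ c - hhat 1} :=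
    hOC.out ⟨Set.mem_Ioi.mpr (by positivity), by linarith⟩ ⟨Set.mem_Ioi.mpr (by positivity), by linarith⟩
  refine joinedIn_of (fun t => mk ((1-t)*a + t*b) 0 0 0) ?_ ?_ ?_ ?_
  · exact continuous_mk (by fun_prop) continuous_const continuous_const continuous_const
  · show mk _ 0 0 0 = mk a 0 0 0
    norm_num
  · show mk _ 0 0 0 = mk b 0 0 0
    norm_num
  · intro t ht0 ht1
    set P := (1-t)*a + t*b with hP
    have hPa : a ≤ P := by nlinarith
    have hPb : P ≤ b := by nlinarith
    have hP0 : 0 < P := lt_of_lt_of_le ha hPa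
    have hPmem : P^2 ∈ Set.Icc (a^2) (b^2) := ⟨by nlinarith, by nlinarith⟩
    obtain ⟨h1, h2⟩ := hsub hPmem
    apply mem_mk
    · norm_num; positivity
    · have hsP : Real.sqrt (P^2 + 0^2) = P := by
        rw [show P^2+(0:ℝ)^2 = P^2 from by ring, Real.sqrt_sq hP0.le]
      rw [hsP]
      norm_num
      rw [div_self (ne_of_gt hP0)]
      linarith
lemma to_scalar (hhat f : ℝ → ℝ) (hh_mono : MonotoneOn hhat (Set.Ici 1)) (c : ℝ)
    (p q r s : ℝ) (h : r^2+s^2 < p^2+q^2) (hmem : mk p q r s ∈ SL hhat f c) :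
    (hhat 1 + f ((p^2+q^2)-(r^2+s^2)) ≤ c) ∧
    JoinedIn (SL hhat f c) (mk p q r s)
      (mk (Real.sqrt ((p^2+q^2)-(r^2+s^2))) 0 0 0) := by
  have hB0 : (0:ℝ) ≤ r^2+s^2 := by positivity
  have hA0 : (0:ℝ) < p^2+q^2 := lt_of_le_of_lt hB0 h
  have hd0 : (0:ℝ) < (p^2+q^2)-(r^2+s^2) := by linarith
  obtain ⟨hsx, hsn⟩ := smaxmin_mk p q r s h
  have hWZ : Real.sqrt (r^2+s^2) < Real.sqrt (p^2+q^2) := Real.sqrt_lt_sqrt hB0 h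
  have hK : hhat ((Real.sqrt (p^2+q^2) + Real.sqrt (r^2+s^2)) /
      (Real.sqrt (p^2+q^2) - Real.sqrt (r^2+s^2))) + f ((p^2+q^2)-(r^2+s^2)) ≤ c := by
    have := hmem.2
    rwa [hsx, hsn, det_mk] at this
  have hrat0 : 1 ≤ (Real.sqrt (p^2+q^2) + Real.sqrt (r^2+s^2)) /
      (Real.sqrt (p^2+q^2) - Real.sqrt (r^2+s^2)) :=
    one_le_ratio_s16 (Real.sqrt_nonneg _) hWZ
  have h1f : hhat 1 + f ((p^2+q^2)-(r^2+s^2)) ≤ c := by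
    have := hh_mono (Set.mem_Ici.2 le_rfl) (Set.mem_Ici.2 hrat0) hrat0
    linarith
  refine ⟨h1f, ?_⟩
  have J1 := step1 hhat f hh_mono c p q r s h hmem
  have hpq' := sq_norm_scale p q ((p^2+q^2)-(r^2+s^2)) hA0 hd0.le
  have J2 := step2 hhat f c (p*Real.sqrt ((p^2+q^2)-(r^2+s^2))/Real.sqrt (p^2+q^2))
      (q*Real.sqrt ((p^2+q^2)-(r^2+s^2))/Real.sqrt (p^2+q^2))
      (by rw [hpq']; exact hd0) (by rw [hpq']; exact h1f)
  rw [hpq'] at J2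
  exact J1.trans J2

lemma main_mk (hhat f : ℝ → ℝ) (hh_mono : MonotoneOn hhat (Set.Ici 1))
    (hf_qconvex : ∀ c' : ℝ, Convex ℝ {t : ℝ | t ∈ Set.Ioi (0 : ℝ) ∧ f t ≤ c'}) (c : ℝ)
    (p q r s p' q' r' s' : ℝ) (h : r^2+s^2 < p^2+q^2) (h' : r'^2+s'^2 < p'^2+q'^2)
    (hm : mk p q r s ∈ SL hhat f c) (hm' : mk p' q' r' s' ∈ SL hhat f c) :
    JoinedIn (SL hhat f c) (mk p q r s) (mk p' q' r' s') := by
  obtain ⟨h1f, JF⟩ := to_scalar hhat f hh_mono c p q r s h hm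
  obtain ⟨h1g, JG⟩ := to_scalar hhat f hh_mono c p' q' r' s' h' hm'
  have hdF : (0:ℝ) < (p^2+q^2)-(r^2+s^2) := by nlinarith [sq_nonneg r, sq_nonneg s]
  have hdG : (0:ℝ) < (p'^2+q'^2)-(r'^2+s'^2) := by nlinarith [sq_nonneg r', sq_nonneg s']
  have haF : 0 < Real.sqrt ((p^2+q^2)-(r^2+s^2)) := Real.sqrt_pos.2 hdF
  have haG : 0 < Real.sqrt ((p'^2+q'^2)-(r'^2+s'^2)) := Real.sqrt_pos.2 hdG
  have ha2 : (Real.sqrt ((p^2+q^2)-(r^2+s^2)))^2 = (p^2+q^2)-(r^2+s^2) := Real.sq_sqrt hdF.le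
  have hb2 : (Real.sqrt ((p'^2+q'^2)-(r'^2+s'^2)))^2 = (p'^2+q'^2)-(r'^2+s'^2) :=
    Real.sq_sqrt hdG.le
  have hconv := hf_qconvex (c - hhat 1)
  have J3 : JoinedIn (SL hhat f c) (mk (Real.sqrt ((p^2+q^2)-(r^2+s^2))) 0 0 0)
      (mk (Real.sqrt ((p'^2+q'^2)-(r'^2+s'^2))) 0 0 0) := by
    rcases le_total (Real.sqrt ((p^2+q^2)-(r^2+s^2))) (Real.sqrt ((p'^2+q'^2)-(r'^2+s'^2))) with
      hle | hle
    · exact step3 hhat f c hconv _ _ haF haG hle (by rw [ha2]; exact h1f) (by rw [hb2]; exact h1g)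
    · exact (step3 hhat f c hconv _ _ haG haF hle (by rw [hb2]; exact h1g)
        (by rw [ha2]; exact h1f)).symm
  exact (JF.trans J3).trans JG.symm

theorem sublevel_sets_pathConnected (hhat f : ℝ → ℝ)
    (hh_mono : MonotoneOn hhat (Set.Ici 1))
    (hf_qconvex : ∀ c' : ℝ, Convex ℝ {t : ℝ | t ∈ Set.Ioi (0 : ℝ) ∧ f t ≤ c'})
    (c : ℝ) :
    ∀ F ∈ {F : Matrix (Fin 2) (Fin 2) ℝ |
        0 < F.det ∧ hhat (smax F / smin F) + f F.det ≤ c},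
      ∀ G ∈ {F : Matrix (Fin 2) (Fin 2) ℝ |
        0 < F.det ∧ hhat (smax F / smin F) + f F.det ≤ c},
      JoinedIn {F : Matrix (Fin 2) (Fin 2) ℝ |
        0 < F.det ∧ hhat (smax F / smin F) + f F.det ≤ c} F G := by
  intro F hF G hG
  show JoinedIn (SL hhat f c) F G
  have hF' : F ∈ SL hhat f c := hF
  have hG' : G ∈ SL hhat f c := hG
  rw [eq_mk F] at hF'
  rw [eq_mk G] at hG'
  rw [eq_mk F, eq_mk G]
  have h1 : ((F 0 0 - F 1 1)/2)^2 + ((F 0 1 + F 1 0)/2)^2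
      < ((F 0 0 + F 1 1)/2)^2 + ((F 1 0 - F 0 1)/2)^2 := by
    have := hF'.1
    rw [det_mk] at this
    linarith
  have h2 : ((G 0 0 - G 1 1)/2)^2 + ((G 0 1 + G 1 0)/2)^2
      < ((G 0 0 + G 1 1)/2)^2 + ((G 1 0 - G 0 1)/2)^2 := by
    have := hG'.1
    rw [det_mk] at this
    linarith
  exact main_mk hhat f hh_mono hf_qconvex c _ _ _ _ _ _ _ _ h1 h2 hF' hG'
end
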